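/- Let H, H', K be Hilbert spaces with H' a closed subspace of K, and let J : H' → K be the inclusion. Let X ∈ B(H, H') be compact, Y ∈ B(H, K) compact with P_{H'} Y = X (where P_{H'} is the orthogonal projection of K onto H'), and Z ∈ B(H, K) an arbitrary compact operator. Then for all positive integers k, ℓ with s_k(X) > 0 and s_k(Z) > 0: s_ℓ(X)/s_k(X) ≤ (1 + ‖Z − JX‖ / s_k(X)) · (s_ℓ(Z) + ‖Y − Z‖) / s_k(Z). -/

import Mathlib

/-- The `k`-th singular value (`k ≥ 1`, in decreasing order) of a bounded operator,
characterized via approximation numbers: `s_k(T) = inf {‖T − R‖ : rank R < k}`. -/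
noncomputable def singularValue {H K : Type*}
    [NormedAddCommGroup H] [InnerProductSpace ℂ H] [CompleteSpace H]
    [NormedAddCommGroup K] [InnerProductSpace ℂ K] [CompleteSpace K]
    (T : H →L[ℂ] K) (k : ℕ) : ℝ :=
  sInf {c : ℝ | ∃ R : H →L[ℂ] K, LinearMap.rank (R : H →ₗ[ℂ] K) < (k : Cardinal) ∧ c = ‖T - R‖}

section aux

universe u v

variable {H : Type u} {K K' : Type v}
    [NormedAddCommGroup H] [InnerProductSpace ℂ H] [CompleteSpace H]
    [NormedAddCommGroup K] [InnerProductSpace ℂ K] [CompleteSpace K]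
    [NormedAddCommGroup K'] [InnerProductSpace ℂ K'] [CompleteSpace K']

lemma sv_set_nonempty (T : H →L[ℂ] K) {k : ℕ} (hk : 1 ≤ k) :
    {c : ℝ | ∃ R : H →L[ℂ] K,
      LinearMap.rank (R : H →ₗ[ℂ] K) < (k : Cardinal) ∧ c = ‖T - R‖}.Nonempty := by
  refine ⟨‖T - 0‖, 0, ?_, rfl⟩
  simp only [ContinuousLinearMap.coe_zero, LinearMap.rank_zero]
  exact_mod_cast Nat.pos_of_ne_zero (by omega)

lemma sv_bddBelow (T : H →L[ℂ] K) (k : ℕ) :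
    BddBelow {c : ℝ | ∃ R : H →L[ℂ] K,
      LinearMap.rank (R : H →ₗ[ℂ] K) < (k : Cardinal) ∧ c = ‖T - R‖} :=
  ⟨0, fun c ⟨R, _, hc⟩ => hc ▸ norm_nonneg _⟩

lemma sv_nonneg (T : H →L[ℂ] K) (k : ℕ) : 0 ≤ singularValue T k :=
  Real.sInf_nonneg fun c ⟨R, _, hc⟩ => hc ▸ norm_nonneg _

lemma sv_le_of_rank (T R : H →L[ℂ] K) {k : ℕ}
    (h : LinearMap.rank (R : H →ₗ[ℂ] K) < (k : Cardinal)) :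
    singularValue T k ≤ ‖T - R‖ :=
  csInf_le (sv_bddBelow T k) ⟨R, h, rfl⟩

lemma sv_lipschitz (S T : H →L[ℂ] K) {k : ℕ} (hk : 1 ≤ k) :
    singularValue S k ≤ singularValue T k + ‖S - T‖ := by
  have h2 : singularValue S k - ‖S - T‖ ≤ singularValue T k := by
    apply le_csInf (sv_set_nonempty T hk)
    rintro c ⟨R, hR, rfl⟩
    have h1 : singularValue S k ≤ ‖S - R‖ := sv_le_of_rank S R hR
    have h3 : ‖S - R‖ ≤ ‖T - R‖ + ‖S - T‖ := by
      have : S - R = (T - R) + (S - T) := by abel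
      rw [this]; exact norm_add_le _ _
    linarith
  linarith

/-- Composing with a norm-≤-1 operator on the left decreases singular values. -/
lemma sv_comp_le (P : K →L[ℂ] K') (hP : ‖P‖ ≤ 1) (T : H →L[ℂ] K) {k : ℕ} (hk : 1 ≤ k) :
    singularValue (P.comp T) k ≤ singularValue T k := by
  apply le_csInf (sv_set_nonempty T hk)
  rintro c ⟨R, hR, rfl⟩
  have hrank : LinearMap.rank ((P.comp R : H →L[ℂ] K') : H →ₗ[ℂ] K') < (k : Cardinal) := by
    have hle : LinearMap.rank ((P : K →ₗ[ℂ] K').comp (R : H →ₗ[ℂ] K)) ≤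
        LinearMap.rank (R : H →ₗ[ℂ] K) := LinearMap.rank_comp_le_right _ _
    exact lt_of_le_of_lt (by simpa using hle) hR
  have h1 : singularValue (P.comp T) k ≤ ‖P.comp T - P.comp R‖ :=
    sv_le_of_rank _ _ hrank
  have h2 : P.comp T - P.comp R = P.comp (T - R) := by
    ext x; simp
  have h3 : ‖P.comp (T - R)‖ ≤ ‖T - R‖ := by
    calc ‖P.comp (T - R)‖ ≤ ‖P‖ * ‖T - R‖ := ContinuousLinearMap.opNorm_comp_le _ _
    _ ≤ 1 * ‖T - R‖ := by gcongr
    _ = ‖T - R‖ := one_mul _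
  rw [h2] at h1
  exact h1.trans h3

end aux

set_option maxHeartbeats 1000000 in
theorem singular_value_ratio_of_dilation
    {H K : Type*}
    [NormedAddCommGroup H] [InnerProductSpace ℂ H] [CompleteSpace H]
    [NormedAddCommGroup K] [InnerProductSpace ℂ K] [CompleteSpace K]
    (H' : Submodule ℂ K) [CompleteSpace H']
    (X : H →L[ℂ] H') (hX : IsCompactOperator X)
    (Y : H →L[ℂ] K) (hY : IsCompactOperator Y)
    (hPY : H'.orthogonalProjectionOnto.comp Y = X)
    (Z : H →L[ℂ] K) (hZ : IsCompactOperator Z)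
    (k l : ℕ) (hk : 1 ≤ k) (hl : 1 ≤ l)
    (hskX : 0 < singularValue X k) (hskZ : 0 < singularValue Z k) :
    singularValue X l / singularValue X k ≤
      (1 + ‖Z - H'.subtypeL.comp X‖ / singularValue X k) *
        ((singularValue Z l + ‖Y - Z‖) / singularValue Z k) := by
  set a := singularValue X l
  set b := singularValue X k
  set c := singularValue Z l
  set d := singularValue Z k
  set e := ‖Y - Z‖
  set f := ‖Z - H'.subtypeL.comp X‖
  have hPnorm : ‖(H'.orthogonalProjectionOnto : K →L[ℂ] H')‖ ≤ 1 :=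
    Submodule.orthogonalProjectionOnto_norm_le H'
  have hJnorm : ‖H'.subtypeL‖ ≤ 1 := by
    apply ContinuousLinearMap.opNorm_le_bound _ zero_le_one
    intro x; simp
  -- a ≤ s_l(Y)
  have h1 : a ≤ singularValue Y l := by
    have := sv_comp_le (H'.orthogonalProjectionOnto) hPnorm Y hl
    rw [hPY] at this
    exact this
  -- s_l(Y) ≤ c + e
  have h2 : singularValue Y l ≤ c + e := sv_lipschitz Y Z hl
  -- d ≤ s_k(JX) + f
  have h3 : d ≤ singularValue (H'.subtypeL.comp X) k + f := by
    have := sv_lipschitz Z (H'.subtypeL.comp X) hk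
    exact this
  -- s_k(JX) ≤ b
  have h4 : singularValue (H'.subtypeL.comp X) k ≤ b :=
    sv_comp_le H'.subtypeL hJnorm X hk
  have ha : 0 ≤ a := sv_nonneg X l
  have hc : 0 ≤ c := sv_nonneg Z l
  have he : 0 ≤ e := norm_nonneg _
  have hf : 0 ≤ f := norm_nonneg _
  have had : a ≤ c + e := h1.trans h2
  have hdb : d ≤ b + f := by linarith
  have h5 : a * d ≤ (c + e) * (b + f) := by nlinarith
  have h6 : (1 + f / b) * ((c + e) / d) = ((c + e) * (b + f)) / (b * d) := by
    field_simp
  rw [h6, div_le_div_iff₀ hskX (by positivity : (0:ℝ) < b * d)]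
  nlinarith [mul_le_mul_of_nonneg_right h5 hskX.le]
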